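/- Let r ≥ 2 be an integer, c₀ ∈ ℕ₀, c₁ ∈ ℂ, and let c_r, c_{r²} be positive real numbers with c_r ≤ 4 c_{r²}. Let φ(s) = c₀ s + c₁ + c_r r^{-s} + c_{r²} r^{-2s}. Then for every integer n ≥ 1 one has ‖n^{-φ}‖_{A⁺} ≥ n^{−Re c₁ + (c_r)²/(8c_{r²}) + c_{r²}}. Consequently, if C_φ maps A⁺ into itself then Re c₁ ≥ (c_r)²/(8 c_{r²}) + c_{r²}, and if C_φ is compact (equivalently, ‖n^{-φ}‖_{A⁺} → 0 as n → ∞) then Re c₁ > (c_r)²/(8 c_{r²}) + c_{r²}. -/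

import Mathlib

open Complex Filter
open scoped ENNReal

noncomputable section

/-- `f` has the Dirichlet series `∑ a n * (n+1)^{-s}` on the half-plane `re s > σ`. -/
def HasDirichletSeriesOn (f : ℂ → ℂ) (a : ℕ → ℂ) (σ : ℝ) : Prop :=
  ∀ s : ℂ, σ < s.re → HasSum (fun n : ℕ => a n * (n + 1 : ℂ) ^ (-s)) (f s)

/-- `f` belongs to the Wiener–Dirichlet algebra `𝒜⁺`, with (absolutely summable)
coefficient sequence `a`, where `a n` is the coefficient of `(n+1)^{-s}`.
The norm of `f` in `𝒜⁺` is `∑' n, ‖a n‖`. -/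
def MemAplus (f : ℂ → ℂ) (a : ℕ → ℂ) : Prop :=
  Summable (fun n : ℕ => ‖a n‖) ∧ HasDirichletSeriesOn f a 0

/-- `ψ` belongs to the class `𝒟` of convergent Dirichlet series: it is analytic on
`re s > 0` and is representable by a convergent Dirichlet series for `re s` large enough. -/
def MemD (ψ : ℂ → ℂ) : Prop :=
  DifferentiableOn ℂ ψ {s : ℂ | 0 < s.re} ∧ ∃ a σ, HasDirichletSeriesOn ψ a σ

/-- Proposition 2.8 (b).  Let `r ≥ 2`, `c₀ ∈ ℕ₀`, `c₁ ∈ ℂ`,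
`c_r, c_{r²} > 0` with `c_r ≤ 4 c_{r²}`, and
`φ(s) = c₀ s + c₁ + c_r r^{-s} + c_{r²} r^{-2s}`.  Then
`‖n^{-φ}‖_{𝒜⁺} ≥ n^{-re c₁ + c_r²/(8 c_{r²}) + c_{r²}}` for every `n ≥ 1`;
consequently, if `C_φ` maps `𝒜⁺` into itself then `re c₁ ≥ c_r²/(8 c_{r²}) + c_{r²}`,
and if `C_φ` is compact (equivalently `‖n^{-φ}‖_{𝒜⁺} → 0`) then the inequality is
strict. -/
lemma re_cpow_nat (r : ℕ) (hr : 0 < r) (w : ℂ) :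
    ((r:ℂ) ^ w).re = Real.exp (Real.log r * w.re) * Real.cos (Real.log r * w.im) := by
  have hr0 : (0:ℝ) < r := by exact_mod_cast hr
  have hne : (r:ℂ) ≠ 0 := by exact_mod_cast hr.ne'
  have h4 : (Complex.log (r:ℂ)).re = Real.log r := by simp [Complex.log_re]
  have h5 : (Complex.log (r:ℂ)).im = 0 := by simp [Complex.log_im]
  rw [Complex.cpow_def_of_ne_zero hne, Complex.exp_re, Complex.mul_re, Complex.mul_im, h4, h5]
  ring_nf

lemma term_norm_le (b : ℕ → ℂ) (k : ℕ) (s : ℂ) (hs : 0 < s.re) :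
    ‖b k * (k + 1 : ℂ) ^ (-s)‖ ≤ ‖b k‖ := by
  have h1 : ((k : ℂ) + 1) = (((k : ℝ) + 1 : ℝ) : ℂ) := by push_cast; ring
  have h2 : ‖(k + 1 : ℂ) ^ (-s)‖ ≤ 1 := by
    rw [h1, Complex.norm_cpow_eq_rpow_re_of_pos (by positivity)]
    exact Real.rpow_le_one_of_one_le_of_nonpos (by simp) (by simp [hs.le])
  rw [norm_mul]
  calc ‖b k‖ * ‖(k + 1 : ℂ) ^ (-s)‖
      ≤ ‖b k‖ * 1 := by
        exact mul_le_mul_of_nonneg_left h2 (norm_nonneg _)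
    _ = ‖b k‖ := mul_one _

lemma aux_point (f : ℂ → ℂ) (a : ℕ → ℂ) (h : MemAplus f a) (s : ℂ) (hs : 0 < s.re) :
    ‖f s‖ ≤ ∑' k, ‖a k‖ := by
  have hsum := h.2 s hs
  have hb : ∀ k : ℕ, ‖a k * (k + 1 : ℂ) ^ (-s)‖ ≤ ‖a k‖ :=
    fun k => term_norm_le a k s hs
  have hsn : Summable (fun k => ‖a k * (k + 1 : ℂ) ^ (-s)‖) :=
    Summable.of_nonneg_of_le (fun _ => norm_nonneg _) hb h.1
  calc ‖f s‖ = ‖∑' k, a k * (k + 1 : ℂ) ^ (-s)‖ := by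
        rw [hsum.tsum_eq]
    _ ≤ ∑' k, ‖a k * (k + 1 : ℂ) ^ (-s)‖ := norm_tsum_le_tsum_norm hsn
    _ ≤ ∑' k, ‖a k‖ := Summable.tsum_le_tsum hb hsn h.1

lemma aux_K (r : ℕ) (hr : 2 ≤ r) (c₀ : ℕ) (c₁ : ℂ) (cr cr2 : ℝ)
    (hcr : 0 < cr) (hcr2 : 0 < cr2) (hle : cr ≤ 4 * cr2) (ε : ℝ) (hε : 0 < ε) :
    ∃ s : ℂ, 0 < s.re ∧
      ((c₀ : ℂ) * s + c₁ + (cr : ℂ) * (r : ℂ) ^ (-s) + (cr2 : ℂ) * (r : ℂ) ^ (-(2 * s))).re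
        < c₁.re - (cr ^ 2 / (8 * cr2) + cr2) + ε := by
  have hr0 : 0 < r := by omega
  have hr1 : (1:ℝ) < r := by exact_mod_cast (by omega : 1 < r)
  have hlr : 0 < Real.log r := Real.log_pos hr1
  set u : ℝ := -(cr / (4 * cr2)) with hu
  have hu1 : -1 ≤ u := by
    have : cr / (4 * cr2) ≤ 1 := by rw [div_le_one (by positivity)]; linarith
    rw [hu]; linarith
  have hu2 : u ≤ 1 := by
    have : 0 < cr / (4 * cr2) := by positivity
    rw [hu]; linarith
  set θ : ℝ := Real.arccos u with hθ
  have hcos : Real.cos θ = u := Real.cos_arccos hu1 hu2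
  set t : ℝ := θ / Real.log r with ht
  have hts : Real.log r * t = θ := by
    rw [ht]; field_simp
  -- the path
  set g : ℝ → ℝ := fun σ =>
    c₀ * σ + c₁.re + cr * (Real.exp (Real.log r * -σ) * Real.cos θ)
      + cr2 * (Real.exp (Real.log r * (-2 * σ)) * Real.cos (2 * θ)) with hg
  have hval : ∀ σ : ℝ, ((c₀ : ℂ) * (⟨σ, t⟩ : ℂ) + c₁ + (cr : ℂ) * (r : ℂ) ^ (-(⟨σ, t⟩ : ℂ))
      + (cr2 : ℂ) * (r : ℂ) ^ (-(2 * (⟨σ, t⟩ : ℂ)))).re = g σ := by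
    intro σ
    have h1 : (-(⟨σ, t⟩ : ℂ)).re = -σ := rfl
    have h1' : (-(⟨σ, t⟩ : ℂ)).im = -t := rfl
    have h2 : (-(2 * (⟨σ, t⟩ : ℂ))).re = -2 * σ := by simp [Complex.mul_re]
    have h2' : (-(2 * (⟨σ, t⟩ : ℂ))).im = -2 * t := by simp [Complex.mul_im]
    rw [Complex.add_re, Complex.add_re, Complex.add_re, Complex.mul_re, Complex.mul_re,
      Complex.mul_re, re_cpow_nat r hr0, re_cpow_nat r hr0, h1, h1', h2, h2']
    have hc1 : Real.cos (Real.log r * -t) = Real.cos θ := by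
      rw [mul_neg, hts, Real.cos_neg]
    have hc2 : Real.cos (Real.log r * (-2 * t)) = Real.cos (2 * θ) := by
      have : Real.log r * (-2 * t) = -(2 * θ) := by rw [← hts]; ring
      rw [this, Real.cos_neg]
    rw [hc1, hc2, hg]
    simp [Complex.natCast_re, Complex.natCast_im, Complex.ofReal_re, Complex.ofReal_im]
  have hg0 : g 0 = c₁.re - (cr ^ 2 / (8 * cr2) + cr2) := by
    rw [hg]
    simp only [mul_zero, neg_zero, mul_neg, Real.exp_zero, one_mul, mul_one, Real.cos_two_mul,
      hcos, hu]
    field_simp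
    ring
  have hcont : ContinuousAt g 0 := by
    rw [hg]; fun_prop
  have hev : ∀ᶠ σ in nhds (0:ℝ), g σ < c₁.re - (cr ^ 2 / (8 * cr2) + cr2) + ε := by
    apply hcont.eventually_lt_const
    rw [hg0]; linarith
  rw [Metric.eventually_nhds_iff] at hev
  obtain ⟨δ, hδ, hδ'⟩ := hev
  refine ⟨(⟨δ/2, t⟩ : ℂ), by simpa using half_pos hδ, ?_⟩
  rw [hval (δ/2)]
  apply hδ'
  rw [Real.dist_eq, sub_zero, abs_of_pos (half_pos hδ)]
  linarith

lemma statement8_part1 (φ : ℂ → ℂ) (r : ℕ) (hr : 2 ≤ r) (c₀ : ℕ) (c₁ : ℂ)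
    (cr cr2 : ℝ) (hcr : 0 < cr) (hcr2 : 0 < cr2) (hle : cr ≤ 4 * cr2)
    (hform : ∀ s : ℂ, 0 < s.re →
      φ s = (c₀ : ℂ) * s + c₁ + (cr : ℂ) * (r : ℂ) ^ (-s) + (cr2 : ℂ) * (r : ℂ) ^ (-(2 * s)))
    (n : ℕ) (hn : 1 ≤ n) (a : ℕ → ℂ)
    (hmem : MemAplus (fun s : ℂ => (n : ℂ) ^ (-(φ s))) a) :
    (n : ℝ) ^ (-c₁.re + cr ^ 2 / (8 * cr2) + cr2) ≤ ∑' k : ℕ, ‖a k‖ := by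
  set L := ∑' k : ℕ, ‖a k‖ with hL
  set E := -c₁.re + cr ^ 2 / (8 * cr2) + cr2 with hE
  have hn0 : (0:ℝ) < n := by exact_mod_cast hn
  have hn1 : (1:ℝ) ≤ n := by exact_mod_cast hn
  have key : ∀ ε : ℝ, 0 < ε → (n : ℝ) ^ (E - ε) ≤ L := by
    intro ε hε
    obtain ⟨s, hs, hlt⟩ := aux_K r hr c₀ c₁ cr cr2 hcr hcr2 hle ε hε
    have h1 : ‖(n:ℂ) ^ (-(φ s))‖ ≤ L := aux_point _ a hmem s hs
    have habs : ‖(n:ℂ) ^ (-(φ s))‖ = (n:ℝ) ^ ((-(φ s)).re) := by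
      rw [← Complex.ofReal_natCast, Complex.norm_cpow_eq_rpow_re_of_pos hn0]
    rw [habs] at h1
    have h2 : E - ε ≤ (-(φ s)).re := by
      rw [Complex.neg_re]
      have := (congrArg Complex.re (hform s hs)).trans_lt hlt
      rw [hE]; linarith
    exact le_trans (Real.rpow_le_rpow_of_exponent_le hn1 h2) h1
  have hlim : Tendsto (fun j : ℕ => (n:ℝ) ^ (E - 1/((j:ℝ)+1))) atTop (nhds ((n:ℝ) ^ E)) := by
    have t1 : Tendsto (fun j : ℕ => E - 1/((j:ℝ)+1)) atTop (nhds (E - 0)) :=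
      tendsto_const_nhds.sub tendsto_one_div_add_atTop_nhds_zero_nat
    rw [sub_zero] at t1
    exact (Real.continuousAt_const_rpow hn0.ne').tendsto.comp t1
  exact le_of_tendsto' hlim (fun j => key _ (by positivity))

lemma statement8_part2 (φ : ℂ → ℂ) (r : ℕ) (hr : 2 ≤ r) (c₀ : ℕ) (c₁ : ℂ)
    (cr cr2 : ℝ) (hcr : 0 < cr) (hcr2 : 0 < cr2) (hle : cr ≤ 4 * cr2)
    (hform : ∀ s : ℂ, 0 < s.re →
      φ s = (c₀ : ℂ) * s + c₁ + (cr : ℂ) * (r : ℂ) ^ (-s) + (cr2 : ℂ) * (r : ℂ) ^ (-(2 * s)))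
    (hmap : ∀ f a, MemAplus f a → ∃ b, MemAplus (f ∘ φ) b) :
    cr ^ 2 / (8 * cr2) + cr2 ≤ c₁.re := by
  have hr0 : 0 < r := by omega
  have hXpos : 0 < cr ^ 2 / (8 * cr2) + cr2 := by positivity
  by_contra hcon
  push_neg at hcon
  have hεpos : 0 < min (cr ^ 2 / (8 * cr2) + cr2) (cr ^ 2 / (8 * cr2) + cr2 - c₁.re) / 2 := by
    have := lt_min hXpos (by linarith : (0:ℝ) < cr ^ 2 / (8 * cr2) + cr2 - c₁.re)
    linarith
  obtain ⟨s₀, hs₀re, hs₀⟩ := aux_K r hr c₀ c₁ cr cr2 hcr hcr2 hle _ hεpos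
  have hφs₀ : (φ s₀).re < c₁.re - (cr ^ 2 / (8 * cr2) + cr2)
      + min (cr ^ 2 / (8 * cr2) + cr2) (cr ^ 2 / (8 * cr2) + cr2 - c₁.re) / 2 := by
    rw [hform s₀ hs₀re]; exact hs₀
  have hmin1 := min_le_left (cr ^ 2 / (8 * cr2) + cr2) (cr ^ 2 / (8 * cr2) + cr2 - c₁.re)
  have hmin2 := min_le_right (cr ^ 2 / (8 * cr2) + cr2) (cr ^ 2 / (8 * cr2) + cr2 - c₁.re)
  have hA0 : (φ s₀).re < 0 := by linarith
  have hAc : (φ s₀).re < c₁.re := by linarith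
  have hM1 := min_le_left (0:ℝ) c₁.re
  have hM2 := min_le_right (0:ℝ) c₁.re
  have hAM : (φ s₀).re < min (0:ℝ) c₁.re := lt_min hA0 hAc
  set α := ((φ s₀).re + min (0:ℝ) c₁.re) / 2 with hα
  have hαA : (φ s₀).re < α := by rw [hα]; linarith
  have hα0 : α < 0 := by rw [hα]; linarith
  have hαc : α < c₁.re := by rw [hα]; linarith
  set F : ℂ → ℂ := fun z => if z.re < α then 1 else 0 with hF
  have hFmem : MemAplus F (fun _ => 0) := by
    constructor
    · simpa using summable_zero
    · intro s hs
      have h1 : F s = 0 := by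
        rw [hF]; simp only [if_neg (by linarith : ¬ s.re < α)]
      rw [h1]
      simpa using hasSum_zero
  obtain ⟨b, hb⟩ := hmap F _ hFmem
  set g : ℂ → ℂ := fun s => ∑' k, b k * (k + 1 : ℂ) ^ (-s) with hgdef
  have hg_eq : ∀ s : ℂ, 0 < s.re → g s = F (φ s) := by
    intro s hs
    exact (hb.2 s hs).tsum_eq
  have hg_cont : ContinuousOn g {s : ℂ | 0 < s.re} := by
    apply continuousOn_tsum (u := fun k => ‖b k‖)
    · intro k
      have hne : ((k:ℂ) + 1) ≠ 0 := by
        have : ((k:ℂ) + 1) = ((k+1 : ℕ) : ℂ) := by push_cast; ring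
        rw [this]
        exact_mod_cast Nat.succ_ne_zero k
      have heq : (fun s : ℂ => b k * (k + 1 : ℂ) ^ (-s))
          = fun s : ℂ => b k * Complex.exp (Complex.log ((k:ℂ) + 1) * (-s)) := by
        funext s
        rw [Complex.cpow_def_of_ne_zero hne]
      rw [heq]
      exact (continuous_const.mul (Complex.continuous_exp.comp
        (continuous_const.mul continuous_neg))).continuousOn
    · exact hb.1
    · intro k s hs
      exact term_norm_le b k s hs
  have hφ1 : c₁.re < (φ 1).re := by
    have h1re : (0:ℝ) < (1:ℂ).re := by simp
    rw [hform 1 h1re]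
    have e1 : ((r:ℂ) ^ (-(1:ℂ))).re = Real.exp (Real.log r * -1) := by
      rw [re_cpow_nat r hr0]; simp
    have e2 : ((r:ℂ) ^ (-(2 * (1:ℂ)))).re = Real.exp (Real.log r * -2) := by
      rw [re_cpow_nat r hr0]; norm_num
    rw [Complex.add_re, Complex.add_re, Complex.add_re, Complex.mul_re, Complex.mul_re,
      Complex.mul_re, e1, e2]
    simp only [Complex.natCast_re, Complex.natCast_im, Complex.ofReal_re, Complex.ofReal_im,
      Complex.one_re, Complex.one_im, mul_zero, mul_one, zero_mul, sub_zero]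
    have q1 : 0 < cr * Real.exp (Real.log r * -1) := by positivity
    have q2 : 0 < cr2 * Real.exp (Real.log r * -2) := by positivity
    have q0 : (0:ℝ) ≤ (c₀:ℝ) := by positivity
    linarith
  have hg1 : g s₀ = 1 := by
    rw [hg_eq s₀ hs₀re, hF]
    simp only [if_pos (show (φ s₀).re < α from hαA)]
  have hg0 : g 1 = 0 := by
    rw [hg_eq 1 (by simp), hF]
    simp only [if_neg (show ¬ (φ 1).re < α from by linarith)]
  have hconn : IsPreconnected {s : ℂ | 0 < s.re} := (convex_halfSpace_re_gt 0).isPreconnected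
  have himg : IsPreconnected (g '' {s : ℂ | 0 < s.re}) := hconn.image g hg_cont
  have hsub : g '' {s : ℂ | 0 < s.re} ⊆ Metric.ball (0:ℂ) 2⁻¹ ∪ Metric.ball (1:ℂ) 2⁻¹ := by
    rintro z ⟨s, hs, rfl⟩
    rw [hg_eq s hs, hF]
    by_cases h : (φ s).re < α
    · right; simp only [if_pos h]
      simp [Metric.mem_ball, dist_self]
    · left; simp only [if_neg h]
      simp [Metric.mem_ball]
  have h0mem : (0:ℂ) ∈ g '' {s : ℂ | 0 < s.re} ∩ Metric.ball (0:ℂ) 2⁻¹ := by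
    constructor
    · exact ⟨1, by simp, hg0⟩
    · simp [Metric.mem_ball]
  have h1mem : (1:ℂ) ∈ g '' {s : ℂ | 0 < s.re} ∩ Metric.ball (1:ℂ) 2⁻¹ := by
    constructor
    · exact ⟨s₀, hs₀re, hg1⟩
    · simp [Metric.mem_ball]
  obtain ⟨z, hzim, hz0, hz1⟩ := himg _ _ Metric.isOpen_ball Metric.isOpen_ball hsub
    ⟨0, h0mem⟩ ⟨1, h1mem⟩
  rw [Metric.mem_ball, dist_eq_norm] at hz0 hz1
  have h4 : ‖z - (z - 1)‖ ≤ ‖z - 0‖ + ‖z - 1‖ := by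
    rw [sub_zero]; exact norm_sub_le _ _
  have h5 : ‖z - (z - 1)‖ = 1 := by
    have : z - (z - 1) = 1 := by ring
    rw [this, norm_one]
  rw [h5] at h4
  linarith

theorem statement_8 (φ : ℂ → ℂ) (r : ℕ) (hr : 2 ≤ r) (c₀ : ℕ) (c₁ : ℂ)
    (cr cr2 : ℝ) (hcr : 0 < cr) (hcr2 : 0 < cr2) (hle : cr ≤ 4 * cr2)
    (hform : ∀ s : ℂ, 0 < s.re →
      φ s = (c₀ : ℂ) * s + c₁ + (cr : ℂ) * (r : ℂ) ^ (-s) + (cr2 : ℂ) * (r : ℂ) ^ (-(2 * s))) :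
    (∀ n : ℕ, 1 ≤ n → ∀ a, MemAplus (fun s : ℂ => (n : ℂ) ^ (-(φ s))) a →
      (n : ℝ) ^ (-c₁.re + cr ^ 2 / (8 * cr2) + cr2) ≤ ∑' k : ℕ, ‖a k‖) ∧
    ((∀ f a, MemAplus f a → ∃ b, MemAplus (f ∘ φ) b) →
      cr ^ 2 / (8 * cr2) + cr2 ≤ c₁.re) ∧
    (∀ A : ℕ → ℕ → ℂ,
      (∀ n : ℕ, MemAplus (fun s : ℂ => (n + 1 : ℂ) ^ (-(φ s))) (A n)) →
      Tendsto (fun n : ℕ => ∑' k : ℕ, ‖A n k‖) atTop (nhds 0) →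
      cr ^ 2 / (8 * cr2) + cr2 < c₁.re) := by

  have part1 := statement8_part1 φ r hr c₀ c₁ cr cr2 hcr hcr2 hle hform
  refine ⟨part1, statement8_part2 φ r hr c₀ c₁ cr cr2 hcr hcr2 hle hform, ?_⟩
  intro A hA htend
  by_contra hcon
  push_neg at hcon
  have h1 : ∀ n : ℕ, (1:ℝ) ≤ ∑' k : ℕ, ‖A n k‖ := by
    intro n
    have hc : ((n+1 : ℕ) : ℂ) = (n : ℂ) + 1 := by push_cast; ring
    have hmem : MemAplus (fun s : ℂ => ((n+1 : ℕ) : ℂ) ^ (-(φ s))) (A n) := by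
      rw [show (fun s : ℂ => ((n+1 : ℕ) : ℂ) ^ (-(φ s)))
          = fun s : ℂ => ((n : ℂ) + 1) ^ (-(φ s)) from by funext s; rw [hc]]
      exact hA n
    have h2 := part1 (n+1) (by omega) (A n) hmem
    calc (1:ℝ) = ((n+1 : ℕ) : ℝ) ^ (0:ℝ) := (Real.rpow_zero _).symm
      _ ≤ ((n+1 : ℕ) : ℝ) ^ (-c₁.re + cr ^ 2 / (8 * cr2) + cr2) :=
          Real.rpow_le_rpow_of_exponent_le (by exact_mod_cast Nat.le_add_left 1 n)
            (by linarith)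
      _ ≤ _ := h2
  obtain ⟨n, hn⟩ := (htend.eventually_lt_const (by norm_num : (0:ℝ) < 1)).exists
  linarith [h1 n]
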